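/- For n ≥ 3, the functions f_{n+1} and f_n (as defined in the paper) satisfy the recursion f_{n+1}(x_0,...,x_n) = f_n(x_0,...,x_{n-1}) ⊕ x_n² ⊕ 2·x_n²·S ⊕ x_n·(2·S)·(2 ⊕ S), where S = ⊕_{i=0}^{n-1} x_i and all arithmetic is mod 3. -/

import Mathlib

lemma ioiLast {M : Type*} [AddCommMonoid M] {n : ℕ} (f : Fin (n+1) → M) :
    ∑ j ∈ Finset.Ioi (Fin.last n), f j = 0 := by
  have h : Finset.Ioi (Fin.last n) = ∅ := by
    ext j; simp [(Fin.le_last j).not_gt]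
  rw [h, Finset.sum_empty]

lemma sum_Ioi_castSucc {M : Type*} [AddCommMonoid M] {n : ℕ} (f : Fin (n+1) → M) (i : Fin n) :
    ∑ j ∈ Finset.Ioi i.castSucc, f j
      = (∑ j ∈ Finset.Ioi i, f j.castSucc) + f (Fin.last n) := by
  have h : Finset.Ioi (Fin.castSucc i)
      = insert (Fin.last n) ((Finset.Ioi i).map Fin.castSuccEmb) := by
    ext j
    simp only [Finset.mem_Ioi, Finset.mem_insert, Finset.mem_map, Fin.castSuccEmb_apply]
    constructor
    · intro hj
      induction j using Fin.lastCases with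
      | last => exact Or.inl rfl
      | cast k => exact Or.inr ⟨k, Fin.castSucc_lt_castSucc_iff.mp hj, rfl⟩
    · rintro (rfl | ⟨k, hk, rfl⟩)
      · exact Fin.castSucc_lt_last i
      · exact Fin.castSucc_lt_castSucc_iff.mpr hk
  rw [h, Finset.sum_insert, Finset.sum_map]
  · rw [add_comm]; rfl
  · simp only [Finset.mem_map]
    rintro ⟨k, _, hk⟩
    exact (Fin.castSucc_lt_last k).ne hk

lemma sq_sum_fin {R : Type*} [CommRing R] {n : ℕ} (x : Fin n → R) :
    (∑ i, x i) ^ 2 = ∑ i, x i ^ 2 + 2 * ∑ i, ∑ j ∈ Finset.Ioi i, x i * x j := by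
  induction n with
  | zero => simp
  | succ n ih =>
    rw [Fin.sum_univ_castSucc (f := x),
        Fin.sum_univ_castSucc (f := fun i => x i ^ 2),
        Fin.sum_univ_castSucc (f := fun i => ∑ j ∈ Finset.Ioi i, x i * x j),
        ioiLast, add_zero]
    simp only [sum_Ioi_castSucc, Finset.sum_add_distrib, ← Finset.sum_mul]
    linear_combination ih (fun i => x i.castSucc)

lemma dsum {R : Type*} [CommRing R] {m : ℕ} (z : Fin m → R) :
    ∑ i, ∑ j ∈ Finset.univ \ {i}, z i ^ 2 * z j
      = (∑ i, z i ^ 2) * (∑ i, z i) - ∑ i, z i ^ 3 := by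
  rw [Finset.sum_mul, ← Finset.sum_sub_distrib]
  refine Finset.sum_congr rfl fun i _ => ?_
  rw [← Finset.mul_sum, Finset.sum_sdiff_eq_sub (Finset.subset_univ _),
    Finset.sum_singleton, mul_sub]
  ring




/-- The function `f_n` of the paper (Eqn. (21)). -/
def fPaper (n : ℕ) (x : Fin n → ZMod 3) : ZMod 3 :=
    ∑ i, x i ^ 2
  + ∑ i, ∑ j ∈ Finset.Ioi i, x i * x j
  + 2 * (∑ i, ∑ j ∈ Finset.univ \ {i}, x i ^ 2 * x j)
  + ∑ i, ∑ j ∈ Finset.Ioi i, ∑ k ∈ Finset.Ioi j, x i * x j * x k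

/-- Recursion: `f_{n+1}(x) = f_n(x₀,…,x_{n-1}) ⊕ x_n² ⊕ 2x_n²S ⊕ x_n(2S)(2 ⊕ S)`
with `S = ⊕_{i<n} x_i`, for `n ≥ 3`. -/
theorem stmt9 (n : ℕ) (hn : 3 ≤ n) (x : Fin (n + 1) → ZMod 3) :
    fPaper (n + 1) x =
      fPaper n (fun i => x i.castSucc)
        + x (Fin.last n) ^ 2
        + 2 * x (Fin.last n) ^ 2 * (∑ i : Fin n, x i.castSucc)
        + x (Fin.last n) * (2 * ∑ i : Fin n, x i.castSucc)
            * (2 + ∑ i : Fin n, x i.castSucc) := by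
  set y := x (Fin.last n) with hy
  set S := ∑ i : Fin n, x i.castSucc with hS
  set Q := ∑ i : Fin n, x i.castSucc ^ 2 with hQ
  set C := ∑ i : Fin n, x i.castSucc ^ 3 with hC
  set P := ∑ i : Fin n, ∑ j ∈ Finset.Ioi i, x i.castSucc * x j.castSucc with hP
  set T := ∑ i : Fin n, ∑ j ∈ Finset.Ioi i, ∑ k ∈ Finset.Ioi j,
      x i.castSucc * x j.castSucc * x k.castSucc with hT
  have hA1 : ∑ i : Fin (n+1), x i ^ 2 = Q + y ^ 2 := Fin.sum_univ_castSucc _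
  have hS1 : ∑ i : Fin (n+1), x i = S + y := Fin.sum_univ_castSucc _
  have hC1 : ∑ i : Fin (n+1), x i ^ 3 = C + y ^ 3 := Fin.sum_univ_castSucc _
  have hB1 : (∑ i : Fin (n+1), ∑ j ∈ Finset.Ioi i, x i * x j) = P + S * y := by
    rw [Fin.sum_univ_castSucc (f := fun i => ∑ j ∈ Finset.Ioi i, x i * x j),
        ioiLast, add_zero]
    simp only [sum_Ioi_castSucc, Finset.sum_add_distrib, ← Finset.sum_mul]
    rfl
  have hT1 : (∑ i : Fin (n+1), ∑ j ∈ Finset.Ioi i, ∑ k ∈ Finset.Ioi j, x i * x j * x k)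
      = T + P * y := by
    rw [Fin.sum_univ_castSucc
        (f := fun i => ∑ j ∈ Finset.Ioi i, ∑ k ∈ Finset.Ioi j, x i * x j * x k),
        ioiLast, add_zero]
    simp only [sum_Ioi_castSucc, ioiLast, add_zero, Finset.sum_add_distrib,
      ← Finset.sum_mul]
    rfl
  have hsq : S ^ 2 = Q + 2 * P := sq_sum_fin _
  have h3 : (3 : ZMod 3) = 0 := rfl
  show _ + _ + 2 * (∑ i, ∑ j ∈ Finset.univ \ {i}, x i ^ 2 * x j) + _ = _ + _ + _ + _
  rw [dsum, hA1, hS1, hC1, hB1, hT1]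
  show _ = Q + P + 2 * (∑ i, ∑ j ∈ Finset.univ \ {i}, _ ^ 2 * _) + T + _ + _ + _
  rw [dsum]
  linear_combination (-2 * y) * hsq + (-(y * P) - y * S) * h3
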